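/- With H_1(λ) = (e^{-λβξ}/(2√(β²+4))) · (e^{r_1(ξ-1)} - e^{r_2(ξ-1)})(e^{r_1 ξ} - e^{r_2 ξ})/(e^{-r_2} - e^{-r_1}), where r_1 = (λ/2)(β+√(β²+4)), r_2 = (λ/2)(β-√(β²+4)), one has for every γ > 0 the uniform bound sup over λ with Re λ = 2γ of |H_1(λ)| ≤ (1/√(β²+4)) · cosh(γ√(β²+4)(1-ξ)) cosh(γ√(β²+4) ξ)/sinh(γ√(β²+4)). -/

import Mathlib

/- Statement 12: the uniform bound for H₁(λ) on the vertical line Re λ = 2γ: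
   |H₁(λ)| ≤ (1/√(β²+4)) cosh(γ√(β²+4)(1-ξ)) cosh(γ√(β²+4)ξ) / sinh(γ√(β²+4)). -/
lemma stmt12_aux (s p q u v : ℝ) (hs : 0 < s) (hp : 0 < p) (hq : 0 < q) (hu : 0 < u)
    (hv : 1 < v) :
    (p ^ 2)⁻¹ / (2 * s) * ((p * q / (u * v) + p * v / (u * q)) * (p * q + p / q)
        / (v / u - (v * u)⁻¹))
      = 1 / s * ((v / q + q / v) / 2 * ((q + q⁻¹) / 2) / ((v - v⁻¹) / 2)) := by
  have h1 : v / u - (v * u)⁻¹ = (v ^ 2 - 1) / (u * v) := by field_simp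
  have h2 : v - v⁻¹ = (v ^ 2 - 1) / v := by field_simp
  have h3 : v ^ 2 - 1 ≠ 0 := by nlinarith
  rw [h1, h2]
  field_simp
  ring

set_option maxHeartbeats 1000000 in
theorem stmt12 (β ξ γ : ℝ) (hβ : 0 < β) (hξ : ξ ∈ Set.Ioo (0 : ℝ) 1) (hγ : 0 < γ) :
    ∀ lam : ℂ, lam.re = 2 * γ →
      Norm.norm
        (Complex.exp (-(lam * (β : ℂ) * (ξ : ℂ)))
            / (2 * ((Real.sqrt (β ^ 2 + 4) : ℝ) : ℂ))
          * ((Complex.exp ((lam / 2) * ((β : ℂ) + (Real.sqrt (β ^ 2 + 4) : ℝ)) * ((ξ : ℂ) - 1))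
                - Complex.exp ((lam / 2) * ((β : ℂ) - (Real.sqrt (β ^ 2 + 4) : ℝ)) * ((ξ : ℂ) - 1)))
              * (Complex.exp ((lam / 2) * ((β : ℂ) + (Real.sqrt (β ^ 2 + 4) : ℝ)) * (ξ : ℂ))
                - Complex.exp ((lam / 2) * ((β : ℂ) - (Real.sqrt (β ^ 2 + 4) : ℝ)) * (ξ : ℂ)))
              / (Complex.exp (-((lam / 2) * ((β : ℂ) - (Real.sqrt (β ^ 2 + 4) : ℝ))))
                - Complex.exp (-((lam / 2) * ((β : ℂ) + (Real.sqrt (β ^ 2 + 4) : ℝ)))))))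
      ≤ (1 / Real.sqrt (β ^ 2 + 4))
          * (Real.cosh (γ * Real.sqrt (β ^ 2 + 4) * (1 - ξ))
              * Real.cosh (γ * Real.sqrt (β ^ 2 + 4) * ξ)
              / Real.sinh (γ * Real.sqrt (β ^ 2 + 4))) := by
  obtain ⟨hξ0, hξ1⟩ := hξ
  intro lam hre
  set s := Real.sqrt (β ^ 2 + 4) with hs_def
  have hs0 : 0 < s := Real.sqrt_pos.mpr (by positivity)
  have hsβ : β < s := by
    have h1 : Real.sqrt (β ^ 2) < s := Real.sqrt_lt_sqrt (by positivity) (by linarith)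
    rwa [Real.sqrt_sq hβ.le] at h1
  have reh : ∀ x : ℝ, (lam * (x : ℂ)).re = 2 * γ * x := by
    intro x; simp [Complex.mul_re, hre]
  -- abbreviations for the real parts
  have habs : ∀ (z : ℂ) (x : ℝ), z = lam * (x : ℂ) →
      Norm.norm (Complex.exp z) = Real.exp (2 * γ * x) := by
    intro z x h; rw [h, Complex.norm_exp, reh]
  simp only [norm_mul, norm_div]
  rw [habs _ (-(β * ξ)) (by push_cast; ring)]
  rw [Complex.norm_two, Complex.norm_real, Real.norm_eq_abs, abs_of_pos hs0]
  -- numerator bounds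
  have hA : Norm.norm
      (Complex.exp ((lam / 2) * ((β : ℂ) + (s : ℂ)) * ((ξ : ℂ) - 1))
        - Complex.exp ((lam / 2) * ((β : ℂ) - (s : ℂ)) * ((ξ : ℂ) - 1)))
      ≤ Real.exp (γ * (β + s) * (ξ - 1)) + Real.exp (γ * (β - s) * (ξ - 1)) := by
    refine (norm_sub_le _ _).trans ?_
    rw [habs _ ((β + s) * (ξ - 1) / 2) (by push_cast; ring),
      habs _ ((β - s) * (ξ - 1) / 2) (by push_cast; ring)]
    apply le_of_eq; ring_nf
  have hB : Norm.norm
      (Complex.exp ((lam / 2) * ((β : ℂ) + (s : ℂ)) * (ξ : ℂ))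
        - Complex.exp ((lam / 2) * ((β : ℂ) - (s : ℂ)) * (ξ : ℂ)))
      ≤ Real.exp (γ * (β + s) * ξ) + Real.exp (γ * (β - s) * ξ) := by
    refine (norm_sub_le _ _).trans ?_
    rw [habs _ ((β + s) * ξ / 2) (by push_cast; ring),
      habs _ ((β - s) * ξ / 2) (by push_cast; ring)]
    apply le_of_eq; ring_nf
  -- denominator lower bound
  have hCpos : (0 : ℝ) < Real.exp (γ * (s - β)) - Real.exp (-(γ * (s + β))) := by
    have : -(γ * (s + β)) < γ * (s - β) := by nlinarith
    simpa using Real.exp_lt_exp.mpr this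
  have hC : Real.exp (γ * (s - β)) - Real.exp (-(γ * (s + β))) ≤ Norm.norm
      (Complex.exp (-((lam / 2) * ((β : ℂ) - (s : ℂ))))
        - Complex.exp (-((lam / 2) * ((β : ℂ) + (s : ℂ))))) := by
    refine le_trans ?_ (norm_sub_norm_le _ _)
    rw [habs _ (-((β - s) / 2)) (by push_cast; ring),
      habs _ (-((β + s) / 2)) (by push_cast; ring)]
    apply le_of_eq; ring_nf
  have key : Real.exp (2 * γ * -(β * ξ)) / (2 * s) *
      (Norm.norm (Complex.exp ((lam / 2) * ((β : ℂ) + (s : ℂ)) * ((ξ : ℂ) - 1))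
          - Complex.exp ((lam / 2) * ((β : ℂ) - (s : ℂ)) * ((ξ : ℂ) - 1)))
        * Norm.norm (Complex.exp ((lam / 2) * ((β : ℂ) + (s : ℂ)) * (ξ : ℂ))
          - Complex.exp ((lam / 2) * ((β : ℂ) - (s : ℂ)) * (ξ : ℂ)))
        / Norm.norm (Complex.exp (-((lam / 2) * ((β : ℂ) - (s : ℂ))))
          - Complex.exp (-((lam / 2) * ((β : ℂ) + (s : ℂ))))))
      ≤ Real.exp (2 * γ * -(β * ξ)) / (2 * s) *
        ((Real.exp (γ * (β + s) * (ξ - 1)) + Real.exp (γ * (β - s) * (ξ - 1)))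
          * (Real.exp (γ * (β + s) * ξ) + Real.exp (γ * (β - s) * ξ))
          / (Real.exp (γ * (s - β)) - Real.exp (-(γ * (s + β))))) := by
    gcongr
  refine key.trans (le_of_eq ?_)
  -- now a purely real identity
  rw [Real.cosh_eq, Real.cosh_eq, Real.sinh_eq]
  have hp : (0:ℝ) < Real.exp (γ * β * ξ) := Real.exp_pos _
  have hq : (0:ℝ) < Real.exp (γ * s * ξ) := Real.exp_pos _
  have hu : (0:ℝ) < Real.exp (γ * β) := Real.exp_pos _
  have hv : (0:ℝ) < Real.exp (γ * s) := Real.exp_pos _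
  have e1 : Real.exp (2 * γ * -(β * ξ)) = (Real.exp (γ * β * ξ) ^ 2)⁻¹ := by
    rw [sq, ← Real.exp_add, ← Real.exp_neg]; congr 1; ring
  have e2 : Real.exp (γ * (β + s) * (ξ - 1))
      = Real.exp (γ * β * ξ) * Real.exp (γ * s * ξ) / (Real.exp (γ * β) * Real.exp (γ * s)) := by
    rw [← Real.exp_add, ← Real.exp_add, ← Real.exp_sub]; congr 1; ring
  have e3 : Real.exp (γ * (β - s) * (ξ - 1))
      = Real.exp (γ * β * ξ) * Real.exp (γ * s) / (Real.exp (γ * β) * Real.exp (γ * s * ξ)) := by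
    rw [← Real.exp_add, ← Real.exp_add, ← Real.exp_sub]; congr 1; ring
  have e4 : Real.exp (γ * (β + s) * ξ) = Real.exp (γ * β * ξ) * Real.exp (γ * s * ξ) := by
    rw [← Real.exp_add]; congr 1; ring
  have e5 : Real.exp (γ * (β - s) * ξ) = Real.exp (γ * β * ξ) / Real.exp (γ * s * ξ) := by
    rw [← Real.exp_sub]; congr 1; ring
  have e6 : Real.exp (γ * (s - β)) = Real.exp (γ * s) / Real.exp (γ * β) := by
    rw [← Real.exp_sub]; congr 1; ring
  have e7 : Real.exp (-(γ * (s + β))) = (Real.exp (γ * s) * Real.exp (γ * β))⁻¹ := by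
    rw [← Real.exp_add, ← Real.exp_neg]; congr 1; ring
  have e8 : Real.exp (γ * s * (1 - ξ)) = Real.exp (γ * s) / Real.exp (γ * s * ξ) := by
    rw [← Real.exp_sub]; congr 1; ring
  have e9 : Real.exp (-(γ * s * (1 - ξ))) = Real.exp (γ * s * ξ) / Real.exp (γ * s) := by
    rw [← Real.exp_sub]; congr 1; ring
  have e10 : Real.exp (-(γ * s * ξ)) = (Real.exp (γ * s * ξ))⁻¹ := Real.exp_neg _
  have e11 : Real.exp (-(γ * s)) = (Real.exp (γ * s))⁻¹ := Real.exp_neg _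
  rw [e1, e2, e3, e4, e5, e6, e7, e8, e9, e10, e11]
  have hv1 : 1 < Real.exp (γ * s) := by
    rw [show (1 : ℝ) = Real.exp 0 from Real.exp_zero.symm]
    exact Real.exp_lt_exp.mpr (by positivity)
  exact stmt12_aux s _ _ _ _ hs0 hp hq hu hv1
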